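/- Let $d > 0$, $n \ge 2$, $0 \le k \le n-1$, $a = 1/d$, $\mu > 0$ small, and $q \ge 0$ an integer. Then the scaled integral $\epsilon^{1/d}\int_{(1,\epsilon^{-\mu})^{n-k}} (\ln(\sigma_1\cdots\sigma_{n-k}))^q \,\frac{1}{\sigma_1\cdots\sigma_{n-k}}\,d\sigma$ is bounded below by $C\,|\ln\epsilon|^{q+n-k}\,\epsilon^{1/d}$ for some constant $C > 0$ and all sufficiently small $\epsilon > 0$. -/

import Mathlib

open MeasureTheory Set

lemma aux_int (q : ℕ) {T : ℝ} (hT : 1 < T) :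
    ∫ s in Ioo (1:ℝ) T, (Real.log s) ^ q * s⁻¹ = (Real.log T) ^ (q + 1) / (q + 1) := by
  have hsub : Set.uIcc (1:ℝ) T ⊆ {0}ᶜ := by
    rw [Set.uIcc_of_le hT.le]
    intro s hs
    simp only [Set.mem_compl_iff, Set.mem_singleton_iff]
    nlinarith [hs.1]
  have hderiv : ∀ s ∈ Set.uIcc (1:ℝ) T,
      HasDerivAt (fun s => (Real.log s) ^ (q + 1) / (q + 1)) ((Real.log s) ^ q * s⁻¹) s := by
    intro s hs
    rw [Set.uIcc_of_le hT.le] at hs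
    have hs0 : s ≠ 0 := by nlinarith [hs.1]
    have h1 : HasDerivAt (fun x => Real.log x ^ (q + 1) / ((q : ℝ) + 1)) _ s :=
      ((Real.hasDerivAt_log hs0).pow (q + 1)).div_const ((q : ℝ) + 1)
    convert h1 using 1
    have : ((q : ℝ) + 1) ≠ 0 := by positivity
    field_simp
    simp only [Nat.add_sub_cancel, Nat.add_sub_cancel_left, Nat.cast_add, Nat.cast_one]
    ring
  have hcont : IntervalIntegrable (fun s => (Real.log s) ^ q * s⁻¹) volume 1 T := by
    apply ContinuousOn.intervalIntegrable
    exact ((Real.continuousOn_log.mono hsub).pow q).mul (continuousOn_inv₀.mono hsub)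
  rw [← integral_Ioc_eq_integral_Ioo, ← intervalIntegral.integral_of_le hT.le,
    intervalIntegral.integral_eq_sub_of_hasDerivAt hderiv hcont]
  simp [Real.log_one]

lemma aux_main (m q : ℕ) (hm : 1 ≤ m) {T : ℝ} (hT : 1 < T) :
    (Real.log T) ^ (q + m) / (q + 1) ≤
      ∫ σ in {σ : Fin m → ℝ | ∀ i, σ i ∈ Set.Ioo (1:ℝ) T},
        (Real.log (∏ i, σ i)) ^ q * (∏ i, σ i)⁻¹ := by
  have hL : 0 < Real.log T := Real.log_pos hT
  set L := Real.log T with hLdef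
  let i0 : Fin m := ⟨0, hm⟩
  set e : Fin m → ℕ := fun i => if i = i0 then q else 0 with he
  set f : Fin m → ℝ → ℝ := fun i s => (Real.log s) ^ (e i) * s⁻¹ with hf
  set S : Set (Fin m → ℝ) := {σ : Fin m → ℝ | ∀ i, σ i ∈ Set.Ioo (1:ℝ) T} with hSdef
  have hSmem : ∀ σ : Fin m → ℝ, σ ∈ S ↔ ∀ i, σ i ∈ Set.Ioo (1:ℝ) T := fun σ => Iff.rfl
  have hSpi : S = Set.pi Set.univ (fun _ : Fin m => Set.Ioo (1:ℝ) T) := by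
    ext σ; simp [hSdef, Set.mem_pi]
  have hS : MeasurableSet S := by
    rw [hSpi]; exact MeasurableSet.univ_pi (fun i => measurableSet_Ioo)
  have hSvol : volume S ≠ ⊤ := by
    rw [hSpi, volume_pi_pi]
    simp only [Real.volume_Ioo, Finset.prod_const]
    exact ENNReal.pow_ne_top ENNReal.ofReal_ne_top
  have hpos : ∀ σ ∈ S, ∀ i, (0:ℝ) < σ i := fun σ hσ i => lt_trans one_pos (hσ i).1
  have hprod_one : ∀ σ ∈ S, (1:ℝ) ≤ ∏ j, σ j := by
    intro σ hσ
    calc (1:ℝ) = ∏ _j : Fin m, (1:ℝ) := by simp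
    _ ≤ ∏ j, σ j := Finset.prod_le_prod (fun j _ => zero_le_one) (fun j _ => (hσ j).1.le)
  have hprod_le : ∀ σ ∈ S, ∏ j, σ j ≤ T ^ m := by
    intro σ hσ
    calc ∏ j, σ j ≤ ∏ _j : Fin m, T :=
      Finset.prod_le_prod (fun j _ => (hpos σ hσ j).le) (fun j _ => (hσ j).2.le)
    _ = T ^ m := by simp
  have hsingle : ∀ σ ∈ S, σ i0 ≤ ∏ j, σ j := by
    intro σ hσ
    rw [← Finset.mul_prod_erase Finset.univ σ (Finset.mem_univ i0)]
    nth_rewrite 1 [← mul_one (σ i0)]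
    apply mul_le_mul_of_nonneg_left _ (hpos σ hσ i0).le
    calc (1:ℝ) = ∏ _j ∈ Finset.univ.erase i0, (1:ℝ) := by simp
    _ ≤ _ := Finset.prod_le_prod (fun j _ => zero_le_one) (fun j _ => (hσ j).1.le)
  -- measurability
  have hPmeas : Measurable (fun σ : Fin m → ℝ => ∏ i, σ i) :=
    Finset.measurable_prod _ (fun i _ => measurable_pi_apply i)
  have hGmeas : Measurable (fun σ : Fin m → ℝ => (Real.log (∏ i, σ i)) ^ q * (∏ i, σ i)⁻¹) :=
    ((Real.measurable_log.comp hPmeas).pow_const q).mul hPmeas.inv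
  have hhmeas : Measurable (fun σ : Fin m → ℝ => ∏ i, f i (σ i)) :=
    Finset.measurable_prod _ (fun i _ =>
      ((Real.measurable_log.comp (measurable_pi_apply i)).pow_const (e i)).mul
        (measurable_pi_apply i).inv)
  -- integrability of the big integrand
  have hGbdd : ∀ σ ∈ S, ‖(Real.log (∏ i, σ i)) ^ q * (∏ i, σ i)⁻¹‖ ≤ (Real.log (T ^ m)) ^ q := by
    intro σ hσ
    have h1 : (0:ℝ) ≤ Real.log (∏ j, σ j) := Real.log_nonneg (hprod_one σ hσ)
    have h2 : Real.log (∏ j, σ j) ≤ Real.log (T ^ m) :=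
      Real.log_le_log (by linarith [hprod_one σ hσ]) (hprod_le σ hσ)
    have h3 : (∏ j, σ j)⁻¹ ≤ 1 := by
      rw [inv_le_one_iff₀]; right; exact hprod_one σ hσ
    have h4 : (0:ℝ) ≤ (∏ j, σ j)⁻¹ := inv_nonneg.mpr (by linarith [hprod_one σ hσ])
    rw [Real.norm_eq_abs, abs_of_nonneg (mul_nonneg (pow_nonneg h1 q) h4)]
    calc (Real.log (∏ i, σ i)) ^ q * (∏ i, σ i)⁻¹ ≤ (Real.log (∏ i, σ i)) ^ q * 1 :=
      mul_le_mul_of_nonneg_left h3 (pow_nonneg h1 q)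
    _ = (Real.log (∏ i, σ i)) ^ q := mul_one _
    _ ≤ (Real.log (T ^ m)) ^ q := pow_le_pow_left₀ h1 h2 q
  have hGint : IntegrableOn
      (fun σ : Fin m → ℝ => (Real.log (∏ i, σ i)) ^ q * (∏ i, σ i)⁻¹) S volume :=
    Measure.integrableOn_of_bounded hSvol hGmeas.aestronglyMeasurable
      (((ae_restrict_iff' hS).2 (ae_of_all _ hGbdd)))
  -- factor bounds for h
  have hfbd : ∀ σ ∈ S, ∀ i : Fin m, (0:ℝ) ≤ f i (σ i) ∧ f i (σ i) ≤ L ^ (e i) := by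
    intro σ hσ i
    have h1 : (0:ℝ) ≤ Real.log (σ i) := Real.log_nonneg (hσ i).1.le
    have h2 : Real.log (σ i) ≤ L := Real.log_le_log (hpos σ hσ i) (hσ i).2.le
    have h3 : (σ i)⁻¹ ≤ 1 := by
      rw [inv_le_one_iff₀]; right; exact (hσ i).1.le
    have h4 : (0:ℝ) ≤ (σ i)⁻¹ := inv_nonneg.mpr (hpos σ hσ i).le
    constructor
    · exact mul_nonneg (pow_nonneg h1 _) h4
    · calc (Real.log (σ i)) ^ (e i) * (σ i)⁻¹ ≤ (Real.log (σ i)) ^ (e i) * 1 :=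
        mul_le_mul_of_nonneg_left h3 (pow_nonneg h1 _)
      _ = (Real.log (σ i)) ^ (e i) := mul_one _
      _ ≤ L ^ (e i) := pow_le_pow_left₀ h1 h2 _
  have hhbdd : ∀ σ ∈ S, ‖∏ i, f i (σ i)‖ ≤ ∏ i : Fin m, L ^ (e i) := by
    intro σ hσ
    rw [Real.norm_eq_abs,
      abs_of_nonneg (Finset.prod_nonneg (fun i _ => (hfbd σ hσ i).1))]
    exact Finset.prod_le_prod (fun i _ => (hfbd σ hσ i).1) (fun i _ => (hfbd σ hσ i).2)
  have hhint : IntegrableOn (fun σ : Fin m → ℝ => ∏ i, f i (σ i)) S volume :=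
    Measure.integrableOn_of_bounded hSvol hhmeas.aestronglyMeasurable
      (((ae_restrict_iff' hS).2 (ae_of_all _ hhbdd)))
  -- pointwise comparison on S
  have hpt : ∀ σ ∈ S, ∏ i, f i (σ i) ≤ (Real.log (∏ i, σ i)) ^ q * (∏ i, σ i)⁻¹ := by
    intro σ hσ
    have hfe : (fun i => f i (σ i)) = fun i => (Real.log (σ i)) ^ (e i) * (σ i)⁻¹ := rfl
    have h1 : ∏ i, f i (σ i) = (∏ i, (Real.log (σ i)) ^ (e i)) * ∏ i, (σ i)⁻¹ := by
      rw [← Finset.prod_mul_distrib]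
    have h2 : ∏ i, (Real.log (σ i)) ^ (e i) = (Real.log (σ i0)) ^ q := by
      rw [Finset.prod_eq_single i0 (fun i _ hi => by simp [he, hi]) (by simp)]
      simp [he]
    have h3 : ∏ i, (σ i)⁻¹ = (∏ i, σ i)⁻¹ := by
      rw [← Finset.prod_inv_distrib]
    have h4 : (Real.log (σ i0)) ^ q ≤ (Real.log (∏ i, σ i)) ^ q := by
      apply pow_le_pow_left₀ (Real.log_nonneg (hσ i0).1.le)
      exact Real.log_le_log (hpos σ hσ i0) (hsingle σ hσ)
    have h5 : (0:ℝ) ≤ (∏ i, σ i)⁻¹ := inv_nonneg.mpr (by linarith [hprod_one σ hσ])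
    rw [h1, h2, h3]
    exact mul_le_mul_of_nonneg_right h4 h5
  have hmono := setIntegral_mono_on hhint hGint hS hpt
  -- compute ∫_S h
  have hindic : S.indicator (fun σ => ∏ i, f i (σ i)) =
      fun σ => ∏ i, (Set.Ioo (1:ℝ) T).indicator (f i) (σ i) := by
    funext σ
    by_cases hσ : σ ∈ S
    · rw [Set.indicator_of_mem hσ]
      exact Finset.prod_congr rfl fun i _ => (Set.indicator_of_mem (hσ i) _).symm
    · rw [Set.indicator_of_notMem hσ]
      rw [hSmem] at hσ
      push_neg at hσ
      obtain ⟨i, hi⟩ := hσ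
      exact (Finset.prod_eq_zero (Finset.mem_univ i) (Set.indicator_of_notMem hi _)).symm
  have hcalc : ∫ σ in S, ∏ i, f i (σ i) = ∏ i : Fin m, ∫ s in Set.Ioo (1:ℝ) T, f i s := by
    rw [← integral_indicator hS, hindic, volume_pi,
      MeasureTheory.integral_fintype_prod_eq_prod
        (fun i => (Set.Ioo (1:ℝ) T).indicator (f i))]
    exact Finset.prod_congr rfl fun i _ => integral_indicator measurableSet_Ioo
  have hval : ∀ i : Fin m, ∫ s in Set.Ioo (1:ℝ) T, f i s = L ^ (e i + 1) / (e i + 1) :=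
    fun i => aux_int (e i) hT
  have hprodval : ∏ i : Fin m, (L ^ (e i + 1) / ((e i : ℝ) + 1)) = L ^ (q + m) / (q + 1) := by
    rw [← Finset.mul_prod_erase Finset.univ _ (Finset.mem_univ i0)]
    have h6 : ∀ i ∈ Finset.univ.erase i0, L ^ (e i + 1) / ((e i : ℝ) + 1) = L := by
      intro i hi
      have : i ≠ i0 := Finset.ne_of_mem_erase hi
      simp [he, this]
    rw [Finset.prod_congr rfl h6, Finset.prod_const,
      Finset.card_erase_of_mem (Finset.mem_univ i0), Finset.card_univ, Fintype.card_fin]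
    have he0 : e i0 = q := by simp [he]
    rw [he0, div_mul_eq_mul_div, ← pow_add]
    congr 2
    omega
  calc L ^ (q + m) / (q + 1) = ∏ i : Fin m, (L ^ (e i + 1) / ((e i : ℝ) + 1)) := hprodval.symm
  _ = ∫ σ in S, ∏ i, f i (σ i) := by rw [hcalc]; exact Finset.prod_congr rfl fun i _ => (hval i).symm
  _ ≤ _ := hmono

/-- The computation (3.25)–(3.26) in the proof of Theorem 1.4(b): the scaled integral
`ε^{1/d} ∫_{(1,ε^{-μ})^{n-k}} (ln(σ₁⋯σ_{n-k}))^q / (σ₁⋯σ_{n-k}) dσ` is bounded below by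
`C |ln ε|^{q+n-k} ε^{1/d}` for small `ε`. -/
theorem stmt19 {n k : ℕ} (hn : 2 ≤ n) (hk : k ≤ n - 1)
    (d : ℝ) (hd : 0 < d) (μ : ℝ) (hμ : 0 < μ) (q : ℕ) :
    ∃ C : ℝ, 0 < C ∧ ∃ ε₀ : ℝ, 0 < ε₀ ∧ ε₀ < 1 ∧ ∀ ε : ℝ, 0 < ε → ε < ε₀ →
      C * |Real.log ε| ^ (q + (n - k)) * ε ^ (1 / d) ≤
        ε ^ (1 / d) *
          ∫ σ in {σ : Fin (n - k) → ℝ | ∀ i, σ i ∈ Set.Ioo (1:ℝ) (ε ^ (-μ))},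
            (Real.log (∏ i, σ i)) ^ q * (∏ i, σ i)⁻¹ := by
  set m := n - k with hm
  have hm1 : 1 ≤ m := by omega
  refine ⟨μ ^ (q + m) / (q + 1), by positivity, 1/2, by norm_num, by norm_num, ?_⟩
  intro ε hε hε2
  have hε1 : ε < 1 := by linarith
  have hT : 1 < ε ^ (-μ) := by
    rw [Real.one_lt_rpow_iff_of_pos hε]
    right; exact ⟨hε1, by linarith⟩
  have hlogε : Real.log ε < 0 := Real.log_neg hε hε1
  have hlogT : Real.log (ε ^ (-μ)) = μ * |Real.log ε| := by
    rw [Real.log_rpow hε, abs_of_neg hlogε]; ring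
  have key := aux_main m q hm1 hT
  rw [hlogT, mul_pow] at key
  have key2 : μ ^ (q + m) / (q + 1) * |Real.log ε| ^ (q + m) ≤
      ∫ σ in {σ : Fin m → ℝ | ∀ i, σ i ∈ Set.Ioo (1:ℝ) (ε ^ (-μ))},
        (Real.log (∏ i, σ i)) ^ q * (∏ i, σ i)⁻¹ := by
    calc μ ^ (q + m) / (q + 1) * |Real.log ε| ^ (q + m)
        = μ ^ (q + m) * |Real.log ε| ^ (q + m) / (q + 1) := by ring
    _ ≤ _ := key
  have hp : (0:ℝ) ≤ ε ^ (1/d) := Real.rpow_nonneg hε.le _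
  calc μ ^ (q + m) / (q + 1) * |Real.log ε| ^ (q + m) * ε ^ (1/d)
      ≤ (∫ σ in {σ : Fin m → ℝ | ∀ i, σ i ∈ Set.Ioo (1:ℝ) (ε ^ (-μ))},
          (Real.log (∏ i, σ i)) ^ q * (∏ i, σ i)⁻¹) * ε ^ (1/d) :=
        mul_le_mul_of_nonneg_right key2 hp
  _ = _ := mul_comm _ _
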